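/- Let i, j, k be integers with i > j > 0 and k > 2i + j, and let N be a positive integer. Define F(N) as the number of integer points (x,y) with 2Nj ≤ x ≤ 2Ni, y = 1 + 2N(i+j), and x + y ≡ N+1 (mod 2), minus the number of integer points (x,y) with 2Nj ≤ x ≤ 2Ni - N - 1, y = 2Ni, and x + y ≡ N+1 (mod 2). Then F(N) = N/2 + 1 if N is even and F(N) = (N-1)/2 if N is odd. In particular F(1) = 0 and F(N) > 0 for all N > 1. -/

import Mathlib

/-- Number of integers in `[a,b]` congruent to `c` mod 2. -/
lemma countp (a c b : ℤ) (hb : a ≤ b) :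
    (((Finset.Icc a b).filter (fun x => x % 2 = c % 2)).card : ℤ)
      = (b - c)/2 - (a - c - 1)/2 := by
  refine Int.le_induction (motive := fun b _ =>
    (((Finset.Icc a b).filter (fun x => x % 2 = c % 2)).card : ℤ)
      = (b - c)/2 - (a - c - 1)/2) ?_ ?_ b hb
  · simp only [Finset.Icc_self, Finset.filter_singleton]
    split_ifs with h
    · simp only [Finset.card_singleton]; push_cast; omega
    · simp only [Finset.card_empty]; push_cast; omega
  · intro b hb ih
    have hins : Finset.Icc a (b+1) = insert (b+1) (Finset.Icc a b) := by
      ext x; simp [Finset.mem_Icc]; omega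
    rw [hins, Finset.filter_insert]
    split_ifs with hp
    · rw [Finset.card_insert_of_notMem (by simp [Finset.mem_Icc])]
      push_cast
      omega
    · omega

/-- The lattice-point count F(N) (which by Rosas' formula equals the
Kronecker coefficient g_{N(k,k), N(k+1,k-1)}^{N(2k-2i-2j,2i,2j)}) satisfies
F(N) = N/2 + 1 for even N and F(N) = (N-1)/2 for odd N; in particular F(1) = 0
and F(N) > 0 for all N > 1. -/
theorem stmt1 (i j k : ℤ) (hij : j < i) (hj : 0 < j) (hk : 2*i + j < k)
    (F : ℤ → ℤ)
    (hF : ∀ N : ℤ, F N =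
      (((Finset.Icc (2*N*j) (2*N*i)).filter
          (fun x => (x + (1 + 2*N*(i+j))) % 2 = (N + 1) % 2)).card : ℤ)
      - (((Finset.Icc (2*N*j) (2*N*i - N - 1)).filter
          (fun x => (x + 2*N*i) % 2 = (N + 1) % 2)).card : ℤ)) :
    (∀ N : ℤ, 0 < N → F N = if Even N then N/2 + 1 else (N - 1)/2)
      ∧ F 1 = 0 ∧ (∀ N : ℤ, 1 < N → 0 < F N) := by
  have key : ∀ N : ℤ, 0 < N → F N = if Even N then N/2 + 1 else (N - 1)/2 := by
    intro N hN
    have hji : N * j ≤ N * i := by nlinarith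
    have hji2 : N + 1 ≤ 2 * (N * i) - 2 * (N * j) := by nlinarith
    have e1 : 2*N*j = 2*(N*j) := by ring
    have e2 : 2*N*i = 2*(N*i) := by ring
    have h1 : Finset.filter (fun x : ℤ => (x + (1 + 2*N*(i+j))) % 2 = (N + 1) % 2)
          (Finset.Icc (2*N*j) (2*N*i))
        = Finset.filter (fun x : ℤ => x % 2 = N % 2) (Finset.Icc (2*N*j) (2*N*i)) := by
      apply Finset.filter_congr
      intro x _
      have h : 2*N*(i+j) = 2*(N*i) + 2*(N*j) := by ring
      rw [h]
      omega
    have h2 : Finset.filter (fun x : ℤ => (x + 2*N*i) % 2 = (N + 1) % 2)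
          (Finset.Icc (2*N*j) (2*N*i - N - 1))
        = Finset.filter (fun x : ℤ => x % 2 = (N+1) % 2)
          (Finset.Icc (2*N*j) (2*N*i - N - 1)) := by
      apply Finset.filter_congr
      intro x _
      rw [e2]
      omega
    rw [hF N, h1, h2, e1, e2,
      countp _ _ _ (by omega : 2*(N*j) ≤ 2*(N*i)),
      countp _ _ _ (by omega : 2*(N*j) ≤ 2*(N*i) - N - 1)]
    rcases Int.even_or_odd N with h | h
    · rw [if_pos h]
      rw [Int.even_iff] at h
      omega
    · rw [if_neg (by simpa [Int.even_iff, Int.odd_iff] using h)]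
      rw [Int.odd_iff] at h
      omega
  refine ⟨key, ?_, ?_⟩
  · have := key 1 (by norm_num)
    simpa using this
  · intro N hN
    have := key N (by omega)
    rcases Int.even_or_odd N with h | h
    · rw [if_pos h] at this; omega
    · rw [if_neg (by simpa [Int.even_iff, Int.odd_iff] using h)] at this
      rw [Int.odd_iff] at h
      omega
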